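/- Let φ : K → L be a geometric and dense morphism of ⊗-triangulated categories, and let C ∈ Spc(L). Define Φ(C) to be the intersection of all ⊗-thick subcategories H ⊆ K such that C ⊆ ⟨φ(H)⟩. Then Φ(C) is a nonzero atomic ⊗-thick subcategory of K, and moreover C ⊆ ⟨φ(Φ(C))⟩. -/

import Mathlib

namespace Balmer

open CategoryTheory CategoryTheory.Limits CategoryTheory.Pretriangulated ZeroObject

universe v u v' u'

variable {K : Type u} [Category.{v} K] [Preadditive K] [HasZeroObject K] [HasShift K ℤ]
  [∀ n : ℤ, (shiftFunctor K n).Additive] [Pretriangulated K] [HasBinaryBiproducts K]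

/-- A `⊗`-thick subcategory of `K` (identified with its set of objects):
a full triangulated subcategory, closed under isomorphisms, translations, cones and
direct summands, which is moreover an ideal for the tensor product on both sides. -/
def IsTensorThick (tensor : K ⥤ K ⥤ K) (S : Set K) : Prop :=
  (0 : K) ∈ S ∧
  (∀ ⦃a b : K⦄, (a ≅ b) → a ∈ S → b ∈ S) ∧
  (∀ a ∈ S, ∀ n : ℤ, (shiftFunctor K n).obj a ∈ S) ∧
  (∀ T ∈ (distTriang K), T.obj₁ ∈ S → T.obj₂ ∈ S → T.obj₃ ∈ S) ∧
  (∀ a b : K, (a ⊞ b) ∈ S → a ∈ S ∧ b ∈ S) ∧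
  (∀ a ∈ S, ∀ b : K, (tensor.obj a).obj b ∈ S ∧ (tensor.obj b).obj a ∈ S)

/-- `⟨D⟩`, the smallest `⊗`-thick subcategory of `K` containing `D`. -/
def tensorSpan (tensor : K ⥤ K ⥤ K) (D : Set K) : Set K :=
  ⋂₀ {S : Set K | IsTensorThick tensor S ∧ D ⊆ S}

/-- A `⊗`-thick subcategory `A` is atomic if whenever `A ⊆ ⟨D⟩` for a collection of
objects `D`, there is some `d ∈ D` with `A ⊆ ⟨d⟩`. -/
def IsAtomic (tensor : K ⥤ K ⥤ K) (A : Set K) : Prop :=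
  IsTensorThick tensor A ∧
    ∀ D : Set K, A ⊆ tensorSpan tensor D → ∃ d ∈ D, A ⊆ tensorSpan tensor {d}

/-- The spectrum `Spc(K,⊗)`: the collection of all nonzero atomic `⊗`-thick
subcategories of `K`. -/
def Spc (tensor : K ⥤ K ⥤ K) : Set (Set K) :=
  {A | IsAtomic tensor A ∧ ∃ a ∈ A, ¬ IsZero a}

variable {L : Type u'} [Category.{v'} L] [Preadditive L] [HasZeroObject L] [HasShift L ℤ]
  [∀ n : ℤ, (shiftFunctor L n).Additive] [Pretriangulated L] [HasBinaryBiproducts L]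

/-- A morphism `φ` of `⊗`-triangulated categories is geometric if `⟨φ(-)⟩`
commutes with arbitrary intersections of `⊗`-thick subcategories. -/
def IsGeometric (tensorK : K ⥤ K ⥤ K) (tensorL : L ⥤ L ⥤ L) (φ : K ⥤ L) : Prop :=
  ∀ 𝒞 : Set (Set K), (∀ C ∈ 𝒞, IsTensorThick tensorK C) →
    tensorSpan tensorL (φ.obj '' ⋂₀ 𝒞) = ⋂ C ∈ 𝒞, tensorSpan tensorL (φ.obj '' C)

/-- A morphism `φ` of `⊗`-triangulated categories is dense if `⟨φ(K)⟩ = L`. -/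
def IsDense (tensorL : L ⥤ L ⥤ L) (φ : K ⥤ L) : Prop :=
  tensorSpan tensorL (Set.range φ.obj) = Set.univ

/-- The map `Φ = Spc(φ)` underlying a geometric and dense morphism `φ`:
`Φ(C)` is the intersection of all `⊗`-thick subcategories `H ⊆ K` such that
`C ⊆ ⟨φ(H)⟩`. -/
def PhiMap (tensorK : K ⥤ K ⥤ K) (tensorL : L ⥤ L ⥤ L) (φ : K ⥤ L) (C : Set L) : Set K :=
  ⋂₀ {H : Set K | IsTensorThick tensorK H ∧ C ⊆ tensorSpan tensorL (φ.obj '' H)}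

section Aux

variable (tensor : K ⥤ K ⥤ K)

lemma isTensorThick_sInter {𝒞 : Set (Set K)} (h : ∀ S ∈ 𝒞, IsTensorThick tensor S) :
    IsTensorThick tensor (⋂₀ 𝒞) := by
  refine ⟨fun S hS => (h S hS).1, ?_, ?_, ?_, ?_, ?_⟩
  · intro a b e ha S hS
    exact (h S hS).2.1 e (ha S hS)
  · intro a ha n S hS
    exact (h S hS).2.2.1 a (ha S hS) n
  · intro T hT h1 h2 S hS
    exact (h S hS).2.2.2.1 T hT (h1 S hS) (h2 S hS)
  · intro a b hab
    exact ⟨fun S hS => ((h S hS).2.2.2.2.1 a b (hab S hS)).1,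
      fun S hS => ((h S hS).2.2.2.2.1 a b (hab S hS)).2⟩
  · intro a ha b
    exact ⟨fun S hS => ((h S hS).2.2.2.2.2 a (ha S hS) b).1,
      fun S hS => ((h S hS).2.2.2.2.2 a (ha S hS) b).2⟩

lemma isTensorThick_tensorSpan (D : Set K) : IsTensorThick tensor (tensorSpan tensor D) :=
  isTensorThick_sInter tensor (fun _ hS => hS.1)

lemma subset_tensorSpan (D : Set K) : D ⊆ tensorSpan tensor D :=
  fun _ ha _ hS => hS.2 ha

lemma tensorSpan_le {D S : Set K} (hS : IsTensorThick tensor S) (h : D ⊆ S) :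
    tensorSpan tensor D ⊆ S := fun _ ha => ha S ⟨hS, h⟩

lemma tensorSpan_mono {D D' : Set K} (h : D ⊆ D') :
    tensorSpan tensor D ⊆ tensorSpan tensor D' :=
  tensorSpan_le tensor (isTensorThick_tensorSpan tensor D')
    (h.trans (subset_tensorSpan tensor D'))

lemma isTensorThick_isZero
    [∀ a : K, (tensor.obj a).CommShift ℤ] [∀ a : K, (tensor.obj a).IsTriangulated]
    [∀ b : K, (tensor.flip.obj b).CommShift ℤ] [∀ b : K, (tensor.flip.obj b).IsTriangulated] :
    IsTensorThick tensor {a : K | IsZero a} := by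
  refine ⟨isZero_zero K, fun a b e ha => ha.of_iso e.symm, ?_, ?_, ?_, ?_⟩
  · intro a ha n
    exact (shiftFunctor K n).map_isZero ha
  · intro T hT h1 h2
    exact Pretriangulated.Triangle.isZero₃_of_isZero₁₂ T hT h1 h2
  · intro a b hab
    have h1 : IsZero a := by
      rw [IsZero.iff_id_eq_zero]
      have : (biprod.fst : a ⊞ b ⟶ a) = 0 := hab.eq_zero_of_src _
      rw [← biprod.inl_fst (X := a) (Y := b), this, comp_zero]
    have h2 : IsZero b := by
      rw [IsZero.iff_id_eq_zero]
      have : (biprod.snd : a ⊞ b ⟶ b) = 0 := hab.eq_zero_of_src _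
      rw [← biprod.inr_snd (X := a) (Y := b), this, comp_zero]
    exact ⟨h1, h2⟩
  · intro a ha b
    exact ⟨(tensor.flip.obj b).map_isZero ha, (tensor.obj b).map_isZero ha⟩

end Aux

section AuxPhi

variable {L : Type u'} [Category.{v'} L] [Preadditive L] [HasZeroObject L] [HasShift L ℤ]
  [∀ n : ℤ, (shiftFunctor L n).Additive] [Pretriangulated L] [HasBinaryBiproducts L]

lemma image_tensorSpan_subset (tensorK : K ⥤ K ⥤ K) (tensorL : L ⥤ L ⥤ L)
    (φ : K ⥤ L) [φ.CommShift ℤ] [φ.IsTriangulated]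
    (e : ∀ a b : K, φ.obj ((tensorK.obj a).obj b) ≅ (tensorL.obj (φ.obj a)).obj (φ.obj b))
    (D : Set K) :
    φ.obj '' tensorSpan tensorK D ⊆ tensorSpan tensorL (φ.obj '' D) := by
  rintro _ ⟨a, ha, rfl⟩
  haveI : PreservesBiproductsOfShape WalkingPair φ := PreservesFiniteBiproducts.preserves
  haveI : PreservesBinaryBiproducts φ := preservesBinaryBiproducts_of_preservesBiproducts φ
  have TL := isTensorThick_tensorSpan tensorL (φ.obj '' D)
  have hS : IsTensorThick tensorK {x : K | φ.obj x ∈ tensorSpan tensorL (φ.obj '' D)} := by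
    refine ⟨?_, ?_, ?_, ?_, ?_, ?_⟩
    · exact TL.2.1 ((isZero_zero L).iso (φ.map_isZero (isZero_zero K))) TL.1
    · intro x y exy hx
      exact TL.2.1 (φ.mapIso exy) hx
    · intro x hx n
      exact TL.2.1 ((φ.commShiftIso n).app x).symm (TL.2.2.1 _ hx n)
    · intro T hT h1 h2
      exact TL.2.2.2.1 (φ.mapTriangle.obj T) (φ.map_distinguished T hT) h1 h2
    · intro x y hxy
      have := TL.2.1 (φ.mapBiprod x y) hxy
      exact TL.2.2.2.2.1 (φ.obj x) (φ.obj y) this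
    · intro x hx y
      exact ⟨TL.2.1 (e x y).symm (TL.2.2.2.2.2 (φ.obj x) hx (φ.obj y)).1,
        TL.2.1 (e y x).symm (TL.2.2.2.2.2 (φ.obj x) hx (φ.obj y)).2⟩
  exact tensorSpan_le tensorK hS
    (fun d hd => subset_tensorSpan tensorL (φ.obj '' D) ⟨d, hd, rfl⟩) ha

end AuxPhi

/-- Proposition 4.6: for a geometric and dense morphism `φ : K ⥤ L` and
`C ∈ Spc(L)`, the subcategory `Φ(C)` is a nonzero atomic `⊗`-thick subcategory of `K`,
and moreover `C ⊆ ⟨φ(Φ(C))⟩`. -/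
theorem stmt8 (tensorK : K ⥤ K ⥤ K) (tensorL : L ⥤ L ⥤ L)
    [∀ a : K, (tensorK.obj a).CommShift ℤ] [∀ a : K, (tensorK.obj a).IsTriangulated]
    [∀ b : K, (tensorK.flip.obj b).CommShift ℤ] [∀ b : K, (tensorK.flip.obj b).IsTriangulated]
    [∀ a : L, (tensorL.obj a).CommShift ℤ] [∀ a : L, (tensorL.obj a).IsTriangulated]
    [∀ b : L, (tensorL.flip.obj b).CommShift ℤ] [∀ b : L, (tensorL.flip.obj b).IsTriangulated]
    (φ : K ⥤ L) [φ.CommShift ℤ] [φ.IsTriangulated]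
    (e : ∀ a b : K, φ.obj ((tensorK.obj a).obj b) ≅ (tensorL.obj (φ.obj a)).obj (φ.obj b))
    (hgeo : IsGeometric tensorK tensorL φ) (hdense : IsDense tensorL φ)
    (C : Set L) (hC : C ∈ Spc tensorL) :
    PhiMap tensorK tensorL φ C ∈ Spc tensorK ∧
      C ⊆ tensorSpan tensorL (φ.obj '' PhiMap tensorK tensorL φ C) := by
  set 𝒞 : Set (Set K) :=
    {H | IsTensorThick tensorK H ∧ C ⊆ tensorSpan tensorL (φ.obj '' H)} with h𝒞
  have hmem : ∀ H ∈ 𝒞, IsTensorThick tensorK H := fun H hH => hH.1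
  have hPhi : PhiMap tensorK tensorL φ C = ⋂₀ 𝒞 := rfl
  have hC2 : C ⊆ tensorSpan tensorL (φ.obj '' PhiMap tensorK tensorL φ C) := by
    rw [hPhi, hgeo 𝒞 hmem]
    intro x hx
    exact Set.mem_iInter₂.2 fun H hH => hH.2 hx
  have hthick : IsTensorThick tensorK (PhiMap tensorK tensorL φ C) :=
    hPhi ▸ isTensorThick_sInter tensorK hmem
  obtain ⟨⟨hCthick, hCatomic⟩, c, hcC, hc⟩ := hC
  refine ⟨⟨⟨hthick, ?_⟩, ?_⟩, hC2⟩
  · -- atomicity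
    intro D hD
    have h1 : φ.obj '' PhiMap tensorK tensorL φ C ⊆ tensorSpan tensorL (φ.obj '' D) :=
      (Set.image_mono hD).trans (image_tensorSpan_subset tensorK tensorL φ e D)
    have hCspan : C ⊆ tensorSpan tensorL (φ.obj '' D) :=
      hC2.trans (tensorSpan_le tensorL (isTensorThick_tensorSpan tensorL (φ.obj '' D)) h1)
    obtain ⟨d', hd', hCd'⟩ := hCatomic (φ.obj '' D) hCspan
    obtain ⟨d, hd, rfl⟩ := hd'
    have hsing : ({φ.obj d} : Set L) ⊆ φ.obj '' tensorSpan tensorK {d} := by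
      rintro x hx
      rw [Set.mem_singleton_iff] at hx
      subst hx
      exact ⟨d, subset_tensorSpan tensorK {d} rfl, rfl⟩
    have hH : tensorSpan tensorK {d} ∈ 𝒞 :=
      ⟨isTensorThick_tensorSpan tensorK {d}, hCd'.trans (tensorSpan_mono tensorL hsing)⟩
    exact ⟨d, hd, fun a ha => Set.mem_sInter.1 (hPhi ▸ ha) _ hH⟩
  · -- nonzero
    by_contra h
    push_neg at h
    have himg : φ.obj '' PhiMap tensorK tensorL φ C ⊆ {a : L | IsZero a} := by
      rintro _ ⟨a, ha, rfl⟩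
      exact φ.map_isZero (h a ha)
    have : C ⊆ {a : L | IsZero a} :=
      hC2.trans (tensorSpan_le tensorL (isTensorThick_isZero tensorL) himg)
    exact hc (this hcC)

end Balmer
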